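/- Let (H → G, ▷̃) be a crossed module of groups with structure map t̃. Define L := H, M := H ⋊ G (with multiplication (h₁,g₁)(h₂,g₂) = (h₁ (g₁ ▷̃ h₂), g₁g₂)), maps t : L → M, h ↦ (h⁻¹, t̃(h)), and t : M → G, (h,g) ↦ t̃(h)g; G-actions g ▷ (h,g') := (g ▷̃ h, g g' g⁻¹) on M and g ▷ h := g ▷̃ h on L; and the Peiffer lifting {(h₁,g₁),(h₂,g₂)} := ((g₁g₂g₁⁻¹) ▷̃ h₁) · h₁⁻¹. Then this data is a 2-crossed module of groups: t ∘ t is trivial, both maps t are G-equivariant group homomorphisms, the G-actions are by automorphisms, the Peiffer lifting is G-equivariant, and the axioms hold: t({m₁,m₂}) = m₁m₂m₁⁻¹ (t(m₁) ▷ m₂⁻¹); {t(ℓ₁),t(ℓ₂)} = ℓ₁ℓ₂ℓ₁⁻¹ℓ₂⁻¹; {m₁m₂,m₃} = {m₁, m₂m₃m₂⁻¹} (t(m₁) ▷ {m₂,m₃}); {m₁,m₂m₃} = {m₁,m₂}{m₁,m₃}{t({m₁,m₃})⁻¹, t(m₁) ▷ m₂}; and ℓ (t(m) ▷ ℓ⁻¹)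 = {t(ℓ),m}{m,t(ℓ)} for all m,mᵢ ∈ M and ℓ,ℓᵢ ∈ L. -/
import Mathlib


/-- For a crossed module of groups `(H → G, ▷̃)` with structure map `t̃`, the
data `L := H`, `M := H ⋊ G`, `t(h) := (h⁻¹, t̃(h))`, `t(h,g) := t̃(h)g`, the `G`-actions
`g ▷ (h,g') := (g ▷̃ h, g g' g⁻¹)` and `g ▷ h := g ▷̃ h`, and Peiffer lifting
`{(h₁,g₁),(h₂,g₂)} := ((g₁g₂g₁⁻¹) ▷̃ h₁) · h₁⁻¹` form a 2-crossed module of groups. -/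
theorem inner_automorphisms_form_two_crossed_module_of_groups
    {H G : Type*} [Group H] [Group G]
    (t : H →* G) (φ : G →* MulAut H)
    (h_equiv : ∀ (g : G) (h : H), t (φ g h) = g * t h * g⁻¹)
    (h_peiffer : ∀ h₁ h₂ : H, φ (t h₁) h₂ = h₁ * h₂ * h₁⁻¹)
    -- structure maps of the inner automorphism 2-crossed module
    (tL : H → H ⋊[φ] G) (h_tL : ∀ h : H, tL h = ⟨h⁻¹, t h⟩)
    (tM : H ⋊[φ] G → G) (h_tM : ∀ m : H ⋊[φ] G, tM m = t m.left * m.right)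
    (actM : G → H ⋊[φ] G → H ⋊[φ] G)
    (h_actM : ∀ (g : G) (m : H ⋊[φ] G),
      actM g m = ⟨φ g m.left, g * m.right * g⁻¹⟩)
    (pf : H ⋊[φ] G → H ⋊[φ] G → H)
    (h_pf : ∀ m₁ m₂ : H ⋊[φ] G,
      pf m₁ m₂ = φ (m₁.right * m₂.right * m₁.right⁻¹) m₁.left * m₁.left⁻¹) :
    -- t ∘ t is trivial
    (∀ h : H, tM (tL h) = 1) ∧
    -- both maps t are group homomorphisms
    (∀ h₁ h₂ : H, tL (h₁ * h₂) = tL h₁ * tL h₂) ∧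
    (∀ m₁ m₂ : H ⋊[φ] G, tM (m₁ * m₂) = tM m₁ * tM m₂) ∧
    -- the G-action on M is an action by automorphisms
    (∀ (g : G) (m₁ m₂ : H ⋊[φ] G), actM g (m₁ * m₂) = actM g m₁ * actM g m₂) ∧
    (∀ m : H ⋊[φ] G, actM 1 m = m) ∧
    (∀ (g₁ g₂ : G) (m : H ⋊[φ] G), actM (g₁ * g₂) m = actM g₁ (actM g₂ m)) ∧
    -- both maps t are G-equivariant
    (∀ (g : G) (h : H), tL (φ g h) = actM g (tL h)) ∧
    (∀ (g : G) (m : H ⋊[φ] G), tM (actM g m) = g * tM m * g⁻¹) ∧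
    -- the Peiffer lifting is G-equivariant
    (∀ (g : G) (m₁ m₂ : H ⋊[φ] G),
      φ g (pf m₁ m₂) = pf (actM g m₁) (actM g m₂)) ∧
    -- the five axioms of a 2-crossed module of groups:
    -- t({m₁,m₂}) = m₁ m₂ m₁⁻¹ (t(m₁) ▷ m₂⁻¹)
    (∀ m₁ m₂ : H ⋊[φ] G,
      tL (pf m₁ m₂) = m₁ * m₂ * m₁⁻¹ * actM (tM m₁) m₂⁻¹) ∧
    -- {t(ℓ₁),t(ℓ₂)} = ℓ₁ℓ₂ℓ₁⁻¹ℓ₂⁻¹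
    (∀ l₁ l₂ : H, pf (tL l₁) (tL l₂) = l₁ * l₂ * l₁⁻¹ * l₂⁻¹) ∧
    -- {m₁m₂,m₃} = {m₁, m₂m₃m₂⁻¹} (t(m₁) ▷ {m₂,m₃})
    (∀ m₁ m₂ m₃ : H ⋊[φ] G,
      pf (m₁ * m₂) m₃ = pf m₁ (m₂ * m₃ * m₂⁻¹) * φ (tM m₁) (pf m₂ m₃)) ∧
    -- {m₁,m₂m₃} = {m₁,m₂}{m₁,m₃}{t({m₁,m₃})⁻¹, t(m₁) ▷ m₂}
    (∀ m₁ m₂ m₃ : H ⋊[φ] G,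
      pf m₁ (m₂ * m₃)
        = pf m₁ m₂ * pf m₁ m₃ * pf (tL (pf m₁ m₃))⁻¹ (actM (tM m₁) m₂)) ∧
    -- ℓ (t(m) ▷ ℓ⁻¹) = {t(ℓ),m}{m,t(ℓ)}
    (∀ (l : H) (m : H ⋊[φ] G),
      l * φ (tM m) l⁻¹ = pf (tL l) m * pf m (tL l)) := by
  have h_equiv' : ∀ (g : G) (h : H), t ((φ g).symm h) = g⁻¹ * t h * g := by
    intro g h
    have := h_equiv g ((φ g).symm h)
    rw [MulEquiv.apply_symm_apply] at this
    rw [this]; group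
  have h_peiffer' : ∀ h₁ h₂ : H, (φ (t h₁)).symm h₂ = h₁⁻¹ * h₂ * h₁ := by
    intro h₁ h₂
    rw [MulEquiv.symm_apply_eq, h_peiffer]; group
  refine ⟨?_, ?_, ?_, ?_, ?_, ?_, ?_, ?_, ?_, ?_, ?_, ?_, ?_, ?_⟩ <;>
    intros <;>
    simp only [h_tL, h_tM, h_actM, h_pf, SemidirectProduct.ext_iff, SemidirectProduct.mul_left,
      SemidirectProduct.mul_right, SemidirectProduct.inv_left, SemidirectProduct.inv_right,
      map_mul, map_inv, map_one, h_equiv, h_peiffer, h_equiv', h_peiffer', MulAut.mul_apply,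
      MulAut.inv_def, MulEquiv.apply_symm_apply, MulEquiv.symm_apply_apply, MulAut.one_apply,
      mul_assoc, mul_inv_cancel, inv_mul_cancel, mul_inv_cancel_left, inv_mul_cancel_left,
      mul_one, one_mul, inv_inv, mul_inv_rev, inv_one, and_self, and_true, true_and]
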